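/- For every positive integer n, the sum over all set partitions w of {1,...,n} of (−2)^(number of parts of w) times the product over parts of (size of part)! times (number of parts − 1)! equals −2·(n−1)! if n is odd, and equals 0 if n is even. -/

import Mathlib

open Finset

namespace GTwo

variable {α : Type*} [DecidableEq α]

/-- weight with `(t-1)!` -/
def wA {s : Finset α} (w : Finpartition s) : ℤ :=
  (-2) ^ w.parts.card * (∏ p ∈ w.parts, (Nat.factorial p.card : ℤ)) *
    (Nat.factorial (w.parts.card - 1) : ℤ)

/-- weight with `t!` -/
def wB {s : Finset α} (w : Finpartition s) : ℤ :=
  (-2) ^ w.parts.card * (∏ p ∈ w.parts, (Nat.factorial p.card : ℤ)) *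
    (Nat.factorial w.parts.card : ℤ)

def sumA (s : Finset α) : ℤ := ∑ w : Finpartition s, wA w
def sumB (s : Finset α) : ℤ := ∑ w : Finpartition s, wB w

/-- Remove a part from a finpartition. -/
def erasePart {s : Finset α} (w : Finpartition s) (B : Finset α) (hB : B ∈ w.parts) :
    Finpartition (s \ B) where
  parts := w.parts.erase B
  supIndep := w.supIndep.subset (erase_subset _ _)
  sup_parts := by
    have hdisj : Disjoint B ((w.parts.erase B).sup id) :=
      w.supIndep (erase_subset _ _) hB (notMem_erase _ _)
    have h : B ∪ (w.parts.erase B).sup id = s := by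
      rw [← Finset.sup_eq_union]
      have := Finset.sup_insert (b := B) (s := w.parts.erase B) (f := id)
      rw [insert_erase hB] at this
      rw [id] at this
      rw [← this, w.sup_parts]
    conv_rhs => rw [← h, union_sdiff_cancel_left hdisj]
  bot_notMem h := w.bot_notMem (mem_of_mem_erase h)

@[simp] lemma parts_erasePart {s : Finset α} (w : Finpartition s) (B : Finset α)
    (hB : B ∈ w.parts) : (erasePart w B hB).parts = w.parts.erase B := rfl

lemma sigma_eq {s : Finset α} {B C : Finset α} (h : C = B)
    {w1 : Finpartition (s \ C)} {w2 : Finpartition (s \ B)} (hw : w1.parts = w2.parts) :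
    (⟨C, w1⟩ : Σ B : Finset α, Finpartition (s \ B)) = ⟨B, w2⟩ := by
  subst h
  exact congrArg _ (Finpartition.ext hw)


/-- Add a block to a finpartition of `s \ B` (total function, junk value otherwise). -/
def extendPart (s : Finset α) (B : Finset α) (w' : Finpartition (s \ B)) : Finpartition s :=
  if h : B.Nonempty ∧ B ⊆ s then
    w'.extend (by simpa [Finset.bot_eq_empty] using h.1.ne_empty)
      (disjoint_sdiff_self_left)
      (by rw [Finset.sup_eq_union, sdiff_union_of_subset h.2])
  else ⊥

lemma parts_extendPart {s B : Finset α} (w' : Finpartition (s \ B)) (h1 : B.Nonempty)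
    (h2 : B ⊆ s) : (extendPart s B w').parts = insert B w'.parts := by
  rw [extendPart, dif_pos ⟨h1, h2⟩]
  rfl

lemma not_mem_parts_sdiff {s B : Finset α} (w' : Finpartition (s \ B)) (h1 : B.Nonempty) :
    B ∉ w'.parts := by
  intro h
  obtain ⟨y, hy⟩ := h1
  have := w'.le h hy
  rw [mem_sdiff] at this
  exact this.2 hy

lemma wA_eq {s : Finset α} (w : Finpartition s) (B : Finset α) (hB : B ∈ w.parts) :
    wA w = (-2) * (Nat.factorial B.card : ℤ) * wB (erasePart w B hB) := by
  have ht : 0 < w.parts.card := card_pos.2 ⟨B, hB⟩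
  rw [wA, wB, parts_erasePart, card_erase_of_mem hB,
    ← Finset.mul_prod_erase w.parts _ hB]
  obtain ⟨t, ht'⟩ : ∃ t, w.parts.card = t + 1 :=
    ⟨w.parts.card - 1, (Nat.succ_pred_eq_of_pos ht).symm⟩
  rw [ht']
  simp only [Nat.add_sub_cancel, pow_succ]
  push_cast
  ring

theorem bij1 {s : Finset α} {x : α} (hx : x ∈ s) :
    sumA s = ∑ B ∈ s.powerset.filter (fun B => x ∈ B),
      (-2) * (Nat.factorial B.card : ℤ) * sumB (s \ B) := by
  have key : sumA s = ∑ p ∈ (s.powerset.filter (fun B => x ∈ B)).sigma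
      (fun B => (univ : Finset (Finpartition (s \ B)))),
      (-2) * (Nat.factorial p.1.card : ℤ) * wB p.2 := by
    rw [sumA]
    refine Finset.sum_bij' (fun w _ => (⟨w.part x, erasePart w (w.part x) (w.part_mem.2 hx)⟩ :
        Σ B : Finset α, Finpartition (s \ B)))
      (fun p _ => extendPart s p.1 p.2) ?_ ?_ ?_ ?_ ?_
    · intro w _
      rw [mem_sigma, mem_filter, mem_powerset]
      exact ⟨⟨w.le (w.part_mem.2 hx), w.mem_part hx⟩, mem_univ _⟩
    · intro p _
      exact mem_univ _
    · intro w _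
      apply Finpartition.ext
      rw [parts_extendPart _ ⟨x, w.mem_part hx⟩ (w.le (w.part_mem.2 hx)), parts_erasePart,
        insert_erase (w.part_mem.2 hx)]
    · rintro ⟨B, w'⟩ hp
      rw [mem_sigma, mem_filter, mem_powerset] at hp
      obtain ⟨⟨hBs, hxB⟩, -⟩ := hp
      have hBne : B.Nonempty := ⟨x, hxB⟩
      have hE : (extendPart s B w').parts = insert B w'.parts := parts_extendPart _ hBne hBs
      have hpart : (extendPart s B w').part x = B := by
        apply Finpartition.part_eq_of_mem _ _ hxB
        rw [hE]
        exact mem_insert_self _ _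
      refine sigma_eq hpart ?_
      rw [parts_erasePart, hE, hpart, erase_insert (not_mem_parts_sdiff w' hBne)]
    · intro w _
      exact wA_eq w (w.part x) (w.part_mem.2 hx)
  rw [key, Finset.sum_sigma]
  refine sum_congr rfl fun B _ => ?_
  rw [sumB, Finset.mul_sum]

theorem bij2 {s : Finset α} (hs : s.Nonempty) :
    sumB s = ∑ B ∈ s.powerset.filter (fun B => B.Nonempty),
      (-2) * (Nat.factorial B.card : ℤ) * sumB (s \ B) := by
  have step1 : sumB s = ∑ w : Finpartition s, ∑ B ∈ w.parts, wA w := by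
    rw [sumB]
    refine Fintype.sum_congr _ _ fun w => ?_
    have ht : 0 < w.parts.card := card_pos.2 (w.parts_nonempty (by
      simpa [Finset.bot_eq_empty] using hs.ne_empty))
    rw [Finset.sum_const, nsmul_eq_mul]
    have h1 : (Nat.factorial w.parts.card : ℤ)
        = (w.parts.card : ℤ) * (Nat.factorial (w.parts.card - 1) : ℤ) := by
      exact_mod_cast (Nat.mul_factorial_pred ht.ne').symm
    rw [wA, wB, h1]
    ring
  have key : (∑ p ∈ (univ.sigma fun w : Finpartition s => w.parts), wA p.1)
      = ∑ p ∈ (s.powerset.filter (fun B => B.Nonempty)).sigma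
        (fun B => (univ : Finset (Finpartition (s \ B)))),
      (-2) * (Nat.factorial p.1.card : ℤ) * wB p.2 := by
    refine Finset.sum_bij' (fun p hp => (⟨p.2, erasePart p.1 p.2 (mem_sigma.1 hp).2⟩ :
        Σ B : Finset α, Finpartition (s \ B)))
      (fun p _ => (⟨extendPart s p.1 p.2, p.1⟩ : Σ w : Finpartition s, Finset α)) ?_ ?_ ?_ ?_ ?_
    · rintro ⟨w, B⟩ hp
      have hB : B ∈ w.parts := (mem_sigma.1 hp).2
      rw [mem_sigma, mem_filter, mem_powerset]
      exact ⟨⟨w.le hB, w.nonempty_of_mem_parts hB⟩, mem_univ _⟩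
    · rintro ⟨B, w'⟩ hp
      rw [mem_sigma]
      refine ⟨mem_univ _, ?_⟩
      rw [mem_sigma, mem_filter, mem_powerset] at hp
      obtain ⟨⟨hBs, hBne⟩, -⟩ := hp
      show B ∈ (extendPart s B w').parts
      rw [parts_extendPart _ hBne hBs]
      exact mem_insert_self _ _
    · rintro ⟨w, B⟩ hp
      have hB : B ∈ w.parts := (mem_sigma.1 hp).2
      refine Sigma.ext ?_ HEq.rfl
      apply Finpartition.ext
      rw [parts_extendPart _ (w.nonempty_of_mem_parts hB) (w.le hB), parts_erasePart,
        insert_erase hB]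
    · rintro ⟨B, w'⟩ hp
      rw [mem_sigma, mem_filter, mem_powerset] at hp
      obtain ⟨⟨hBs, hBne⟩, -⟩ := hp
      refine sigma_eq rfl ?_
      rw [parts_erasePart, parts_extendPart _ hBne hBs,
        erase_insert (not_mem_parts_sdiff w' hBne)]
    · rintro ⟨w, B⟩ hp
      exact wA_eq w B (mem_sigma.1 hp).2
  have step2 : (∑ w : Finpartition s, ∑ B ∈ w.parts, wA w)
      = ∑ p ∈ (univ.sigma fun w : Finpartition s => w.parts), wA p.1 :=
    (Finset.sum_sigma univ (fun w => w.parts) (fun p => wA p.1)).symm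
  rw [step1, step2, key, Finset.sum_sigma]
  refine sum_congr rfl fun B _ => ?_
  rw [sumB, Finset.mul_sum]


def bN : ℕ → ℤ := fun m => if m = 0 then 1 else (-1) ^ m * 2 * (Nat.factorial m : ℤ)

lemma bN_zero : bN 0 = 1 := rfl

lemma bN_pos {m : ℕ} (h : m ≠ 0) : bN m = (-1) ^ m * 2 * (Nat.factorial m : ℤ) := if_neg h

lemma sum_alt_lin (m : ℕ) : 2 * ∑ k ∈ range m, (-1 : ℤ) ^ k * (k + 1) =
    if Even m then -(m : ℤ) else (m : ℤ) + 1 := by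
  induction m with
  | zero => simp
  | succ m ih =>
    rw [Finset.sum_range_succ, mul_add, ih]
    rcases Nat.even_or_odd m with h | h
    · rw [if_pos h, if_neg (by simp [Nat.even_add_one, h]), h.neg_one_pow]
      push_cast
      ring
    · rw [if_neg (by simp [Nat.even_add_one, Nat.not_even_iff_odd.2 h]),
        if_pos (Nat.even_add_one.2 (Nat.not_even_iff_odd.2 h)), h.neg_one_pow]
      push_cast
      ring

lemma group_powerset (s : Finset α) (F : ℕ → ℤ) :
    ∑ B ∈ s.powerset, F B.card = ∑ j ∈ range (s.card + 1), (s.card.choose j : ℤ) * F j := by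
  rw [Finset.sum_powerset]
  refine sum_congr rfl fun j hj => ?_
  rw [Finset.sum_powersetCard j s F, nsmul_eq_mul]

lemma bN_rec (m : ℕ) :
    ∑ j ∈ range (m + 2), ((m + 1).choose j : ℤ) *
        ((-2) * (Nat.factorial j : ℤ) * bN (m + 1 - j)) = -bN (m + 1) := by
  rw [Finset.sum_range_succ, Finset.sum_range_succ']
  have hmid : ∀ i ∈ range m, ((m + 1).choose (i + 1) : ℤ) *
      ((-2) * (Nat.factorial (i + 1) : ℤ) * bN (m + 1 - (i + 1)))
      = -4 * (Nat.factorial (m + 1) : ℤ) * (-1) ^ (m - i) := by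
    intro i hi
    rw [mem_range] at hi
    have h1 : m + 1 - (i + 1) = m - i := by omega
    have h2 : m - i ≠ 0 := by omega
    rw [h1, bN_pos h2]
    have h3 : ((m + 1).choose (i + 1) : ℤ) * (Nat.factorial (i + 1) : ℤ) *
        (Nat.factorial (m - i) : ℤ) = (Nat.factorial (m + 1) : ℤ) := by
      have h4 := Nat.choose_mul_factorial_mul_factorial (show i + 1 ≤ m + 1 by omega)
      rw [show m + 1 - (i + 1) = m - i by omega] at h4
      exact_mod_cast h4
    linear_combination ((-4 : ℤ) * (-1) ^ (m - i)) * h3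
  rw [Finset.sum_congr rfl hmid]
  have hpow : ∑ i ∈ range m, (-1 : ℤ) ^ (m - i) = ∑ i ∈ range m, (-1 : ℤ) ^ (i + 1) := by
    rw [← Finset.sum_range_reflect (fun j => (-1 : ℤ) ^ (j + 1)) m]
    refine Finset.sum_congr rfl fun i hi => ?_
    rw [mem_range] at hi
    congr 1
    omega
  have hswap : ∑ i ∈ range m, (-4 * (Nat.factorial (m + 1) : ℤ) * (-1) ^ (m - i))
      = -4 * (Nat.factorial (m + 1) : ℤ) * ∑ i ∈ range m, (-1 : ℤ) ^ (i + 1) := by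
    rw [← Finset.mul_sum, hpow]
  rw [hswap]
  have hA : ∑ i ∈ range m, (-1 : ℤ) ^ (i + 1) = -(if Even m then 0 else 1) := by
    have := neg_one_geom_sum (R := ℤ) (n := m)
    calc ∑ i ∈ range m, (-1 : ℤ) ^ (i + 1) = ∑ i ∈ range m, (-1 : ℤ) ^ i * (-1) := by
          refine Finset.sum_congr rfl fun i _ => ?_
          rw [pow_succ]
      _ = -(if Even m then 0 else 1) := by rw [← Finset.sum_mul, this]; ring
  rw [hA]
  have hb0 : bN (m + 1 - 0) = bN (m + 1) := by norm_num
  have hbtop : bN (m + 1 - (m + 1)) = 1 := by simp [bN_zero]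
  rw [hb0, hbtop, bN_pos (Nat.succ_ne_zero m)]
  rcases Nat.even_or_odd m with h | h
  · have hp : (-1 : ℤ) ^ (m + 1) = -1 := (h.add_one).neg_one_pow
    rw [if_pos h]
    simp only [Nat.succ_eq_add_one, hp, Nat.choose_zero_right, Nat.choose_self,
      Nat.factorial_zero]
    push_cast
    ring
  · have hp : (-1 : ℤ) ^ (m + 1) = 1 := (h.add_one).neg_one_pow
    rw [if_neg (Nat.not_even_iff_odd.2 h)]
    simp only [Nat.succ_eq_add_one, hp, Nat.choose_zero_right, Nat.choose_self,
      Nat.factorial_zero]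
    push_cast
    ring


theorem sumB_eq (n : ℕ) (s : Finset α) (hs : s.card = n) : sumB s = bN n := by
  induction n using Nat.strong_induction_on generalizing s with
  | _ n ih =>
    rcases s.eq_empty_or_nonempty with rfl | hne
    · rw [card_empty] at hs
      subst hs
      rw [bN_zero, sumB]
      have hp : ∀ w : Finpartition (∅ : Finset α), w.parts = ∅ := fun w =>
        Finpartition.parts_eq_empty_iff.2 Finset.bot_eq_empty.symm
      haveI : Subsingleton (Finpartition (∅ : Finset α)) :=
        ⟨fun a b => Finpartition.ext (by rw [hp a, hp b])⟩
      rw [Fintype.sum_subsingleton _ ⊥, wB, hp ⊥]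
      simp
    · obtain ⟨m, rfl⟩ : ∃ m, n = m + 1 := by
        refine ⟨n - 1, ?_⟩
        have := card_pos.2 hne
        omega
      rw [bij2 hne]
      have hstep : ∀ B ∈ s.powerset.filter (fun B => B.Nonempty),
          (-2) * (Nat.factorial B.card : ℤ) * sumB (s \ B)
            = (-2) * (Nat.factorial B.card : ℤ) * bN (m + 1 - B.card) := by
        intro B hB
        rw [mem_filter, mem_powerset] at hB
        have hlt : m + 1 - B.card < m + 1 := by
          have := card_pos.2 hB.2
          omega
        rw [ih _ hlt (s \ B) (by rw [card_sdiff_of_subset hB.1, hs])]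
      rw [Finset.sum_congr rfl hstep]
      have hnotf : s.powerset.filter (fun B => ¬ B.Nonempty) = {∅} := by
        ext B
        simp [Finset.not_nonempty_iff_eq_empty]
        rintro rfl
        exact empty_subset s
      have hsplit := Finset.sum_filter_add_sum_filter_not s.powerset (fun B => B.Nonempty)
        (fun B => (-2) * (Nat.factorial B.card : ℤ) * bN (m + 1 - B.card))
      rw [hnotf, Finset.sum_singleton] at hsplit
      have hgroup : ∑ B ∈ s.powerset,
          ((-2) * (Nat.factorial B.card : ℤ) * bN (m + 1 - B.card))
          = ∑ j ∈ range (m + 2), ((m + 1).choose j : ℤ) *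
            ((-2) * (Nat.factorial j : ℤ) * bN (m + 1 - j)) := by
        have := group_powerset (α := α) s (fun j => (-2) * (Nat.factorial j : ℤ) * bN (m + 1 - j))
        rw [hs] at this
        exact this
      rw [hgroup, bN_rec m] at hsplit
      have hempty : (-2) * (Nat.factorial (∅ : Finset α).card : ℤ) * bN (m + 1 - (∅ : Finset α).card)
          = -2 * bN (m + 1) := by
        simp
      rw [hempty] at hsplit
      linarith

lemma sum_filter_mem {s : Finset α} {x : α} (hx : x ∈ s) (f : Finset α → ℤ) :
    ∑ B ∈ s.powerset.filter (fun B => x ∈ B), f B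
      = ∑ C ∈ (s.erase x).powerset, f (insert x C) := by
  refine Finset.sum_bij' (fun B _ => B.erase x) (fun C _ => insert x C) ?_ ?_ ?_ ?_ ?_
  · intro B hB
    rw [mem_filter, mem_powerset] at hB
    rw [mem_powerset]
    exact erase_subset_erase _ hB.1
  · intro C hC
    rw [mem_powerset] at hC
    rw [mem_filter, mem_powerset]
    exact ⟨insert_subset hx (hC.trans (erase_subset _ _)), mem_insert_self _ _⟩
  · intro B hB
    rw [mem_filter] at hB
    exact insert_erase hB.2
  · intro C hC
    rw [mem_powerset] at hC
    exact erase_insert (fun hxC => (mem_erase.1 (hC hxC)).1 rfl)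
  · intro B hB
    rw [mem_filter] at hB
    rw [insert_erase hB.2]

lemma a_rec (m : ℕ) :
    ∑ j ∈ range (m + 1), (m.choose j : ℤ) *
        ((-2) * (Nat.factorial (j + 1) : ℤ) * bN (m - j))
      = if Odd (m + 1) then -2 * (Nat.factorial m : ℤ) else 0 := by
  rw [Finset.sum_range_succ]
  have hmid : ∀ j ∈ range m, (m.choose j : ℤ) *
      ((-2) * (Nat.factorial (j + 1) : ℤ) * bN (m - j))
      = -4 * (Nat.factorial m : ℤ) * (((j : ℤ) + 1) * (-1) ^ (m - j)) := by
    intro j hj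
    rw [mem_range] at hj
    have h2 : m - j ≠ 0 := by omega
    rw [bN_pos h2, Nat.factorial_succ]
    have h3 : (m.choose j : ℤ) * (Nat.factorial j : ℤ) * (Nat.factorial (m - j) : ℤ)
        = (Nat.factorial m : ℤ) := by
      exact_mod_cast Nat.choose_mul_factorial_mul_factorial (le_of_lt hj)
    push_cast
    linear_combination ((-4 : ℤ) * ((j : ℤ) + 1) * (-1) ^ (m - j)) * h3
  rw [Finset.sum_congr rfl hmid]
  have hpow : ∑ j ∈ range m, (((j : ℤ) + 1) * (-1) ^ (m - j))
      = ∑ j ∈ range m, (((m : ℤ) - j) * (-1) ^ (j + 1)) := by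
    rw [← Finset.sum_range_reflect (fun j => ((m : ℤ) - j) * (-1 : ℤ) ^ (j + 1)) m]
    refine Finset.sum_congr rfl fun j hj => ?_
    rw [mem_range] at hj
    have e1 : m - 1 - j + 1 = m - j := by omega
    have e2 : (m : ℤ) - (m - 1 - j : ℕ) = (j : ℤ) + 1 := by
      push_cast [Nat.cast_sub (by omega : j ≤ m - 1), Nat.cast_sub (by omega : 1 ≤ m)]
      ring
    rw [e1, e2]
  have hsum : ∑ j ∈ range m, (-4 * (Nat.factorial m : ℤ) * (((j : ℤ) + 1) * (-1) ^ (m - j)))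
      = -4 * (Nat.factorial m : ℤ) * ∑ j ∈ range m, (((m : ℤ) - j) * (-1) ^ (j + 1)) := by
    rw [← Finset.mul_sum, hpow]
  rw [hsum]
  have hexp : ∑ j ∈ range m, (((m : ℤ) - j) * (-1) ^ (j + 1))
      = (∑ j ∈ range m, (-1 : ℤ) ^ j * (j + 1))
        - ((m : ℤ) + 1) * ∑ j ∈ range m, (-1 : ℤ) ^ j := by
    rw [Finset.mul_sum, ← Finset.sum_sub_distrib]
    refine Finset.sum_congr rfl fun j _ => ?_
    rw [pow_succ]
    ring
  rw [hexp]
  have hL := sum_alt_lin m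
  have hA := neg_one_geom_sum (R := ℤ) (n := m)
  rw [hA] at *
  rw [Nat.choose_self, Nat.factorial_succ]
  have hb0 : bN (m - m) = 1 := by simp [bN_zero]
  rw [hb0]
  rcases Nat.even_or_odd m with h | h
  · rw [if_pos h] at hL
    rw [if_pos h]
    rw [if_pos (h.add_one)]
    push_cast
    linear_combination (-2 * (Nat.factorial m : ℤ)) * hL
  · rw [if_neg (Nat.not_even_iff_odd.2 h)] at hL
    rw [if_neg (Nat.not_even_iff_odd.2 h)]
    rw [if_neg (by simpa [Nat.even_add_one] using Nat.not_even_iff_odd.2 h)]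
    push_cast
    linear_combination (-2 * (Nat.factorial m : ℤ)) * hL

theorem sumA_eq {s : Finset α} {x : α} (hx : x ∈ s) :
    sumA s = if Odd s.card then -2 * (Nat.factorial (s.card - 1) : ℤ) else 0 := by
  obtain ⟨m, hm⟩ : ∃ m, s.card = m + 1 := by
    refine ⟨s.card - 1, ?_⟩
    have := card_pos.2 ⟨x, hx⟩
    omega
  rw [bij1 hx]
  have h1 : ∀ B ∈ s.powerset.filter (fun B => x ∈ B),
      (-2) * (Nat.factorial B.card : ℤ) * sumB (s \ B)
        = (-2) * (Nat.factorial B.card : ℤ) * bN (s.card - B.card) := by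
    intro B hB
    rw [mem_filter, mem_powerset] at hB
    rw [sumB_eq _ _ (card_sdiff_of_subset hB.1)]
  rw [Finset.sum_congr rfl h1, sum_filter_mem hx]
  have h2 : ∀ C ∈ (s.erase x).powerset,
      (-2) * (Nat.factorial (insert x C).card : ℤ) * bN (s.card - (insert x C).card)
        = (-2) * (Nat.factorial (C.card + 1) : ℤ) * bN (m - C.card) := by
    intro C hC
    rw [mem_powerset] at hC
    have hxC : x ∉ C := fun hxC => (mem_erase.1 (hC hxC)).1 rfl
    rw [card_insert_of_notMem hxC, hm]
    congr 2
    omega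
  rw [Finset.sum_congr rfl h2]
  have h3 := group_powerset (α := α) (s.erase x)
    (fun j => (-2) * (Nat.factorial (j + 1) : ℤ) * bN (m - j))
  rw [card_erase_of_mem hx, hm] at h3
  simp only [Nat.add_sub_cancel] at h3
  rw [h3, a_rec m, hm]
  simp

end GTwo

open GTwo in
theorem g_at_neg_two (n : ℕ) (hn : 0 < n) :
    ∑ w : Finpartition (Finset.univ : Finset (Fin n)),
      (-2 : ℤ) ^ w.parts.card * (∏ p ∈ w.parts, (Nat.factorial p.card : ℤ)) *
        (Nat.factorial (w.parts.card - 1) : ℤ)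
    = if Odd n then -2 * (Nat.factorial (n - 1) : ℤ) else 0 := by
  obtain ⟨m, rfl⟩ : ∃ m, n = m + 1 := ⟨n - 1, by omega⟩
  have h0 : (0 : Fin (m + 1)) ∈ (Finset.univ : Finset (Fin (m + 1))) := mem_univ _
  have := sumA_eq h0
  rw [card_univ, Fintype.card_fin] at this
  exact this
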